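/- For every positive even integer n, the edge-balanced index set of the crown graph K_n × K_2 equals the set of even integers from 0 to 2n−4; that is, EBI(K_n × K_2) = { k : k is even and 0 ≤ k ≤ 2n−4 }. -/

import Mathlib

open SimpleGraph

/-- The lexicographic product (composition) `G[H]`. -/
def lexProd {α β : Type*} (G : SimpleGraph α) (H : SimpleGraph β) :
    SimpleGraph (α × β) where
  Adj x y := G.Adj x.1 y.1 ∨ (x.1 = y.1 ∧ H.Adj x.2 y.2)
  symm := ⟨fun x y (h : G.Adj x.1 y.1 ∨ (x.1 = y.1 ∧ H.Adj x.2 y.2)) =>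
    h.elim (fun h' => Or.inl h'.symm) (fun ⟨he, h2⟩ => Or.inr ⟨he.symm, h2.symm⟩)⟩
  loopless := ⟨fun x (h : G.Adj x.1 x.1 ∨ (x.1 = x.1 ∧ H.Adj x.2 x.2)) =>
    h.elim (G.loopless.irrefl x.1) (fun ⟨_, h2⟩ => H.loopless.irrefl x.2 h2)⟩

/-- The direct (tensor, Kronecker) product `G × H`. -/
def tensorProd {α β : Type*} (G : SimpleGraph α) (H : SimpleGraph β) :
    SimpleGraph (α × β) where
  Adj x y := G.Adj x.1 y.1 ∧ H.Adj x.2 y.2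
  symm := ⟨fun _ _ (⟨h1, h2⟩ : _ ∧ _) => ⟨h1.symm, h2.symm⟩⟩
  loopless := ⟨fun x (h : _ ∧ _) => G.loopless.irrefl x.1 h.1⟩

/-- The number of edges labeled `i` by the edge labeling `f`. -/
noncomputable def edgeCount {V : Type*} (G : SimpleGraph V) (f : G.edgeSet → ZMod 2) (i : ZMod 2) : ℕ :=
  Nat.card {e : G.edgeSet // f e = i}

/-- The number of edges incident to `v` that are labeled `i` (the `i`-degree of `v`). -/
noncomputable def labDeg {V : Type*} (G : SimpleGraph V) (f : G.edgeSet → ZMod 2) (i : ZMod 2) (v : V) : ℕ :=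
  Nat.card {e : G.edgeSet // f e = i ∧ v ∈ (e : Sym2 V)}

/-- The number of vertices whose induced (partial) label is `i`: those incident to strictly
more `i`-edges than `(1-i)`-edges. -/
noncomputable def vertexCount {V : Type*} (G : SimpleGraph V) (f : G.edgeSet → ZMod 2) (i : ZMod 2) : ℕ :=
  Nat.card {v : V // labDeg G f (1 - i) v < labDeg G f i v}

/-- An edge labeling (a surjective function onto `ZMod 2`) is edge-friendly if
`|e_f(0) - e_f(1)| ≤ 1`. -/
def EdgeFriendly {V : Type*} (G : SimpleGraph V) (f : G.edgeSet → ZMod 2) : Prop :=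
  Function.Surjective f ∧ |(edgeCount G f 0 : ℤ) - (edgeCount G f 1 : ℤ)| ≤ 1

/-- A graph is strongly edge-balanced if some edge-friendly labeling `f` satisfies
`v_f(0) = v_f(1)` and `e_f(0) = e_f(1)`. -/
def StronglyEdgeBalanced {V : Type*} (G : SimpleGraph V) : Prop :=
  ∃ f : G.edgeSet → ZMod 2, EdgeFriendly G f ∧
    vertexCount G f 0 = vertexCount G f 1 ∧ edgeCount G f 0 = edgeCount G f 1

/-- `|v_f(0) - v_f(1)|` for an edge labeling `f`. -/
noncomputable def ebIndex {V : Type*} (G : SimpleGraph V) (f : G.edgeSet → ZMod 2) : ℕ :=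
  ((vertexCount G f 0 : ℤ) - (vertexCount G f 1 : ℤ)).natAbs

/-- The edge-balanced index set of `G`. -/
def EBI {V : Type*} (G : SimpleGraph V) : Set ℕ :=
  {k | ∃ f : G.edgeSet → ZMod 2, EdgeFriendly G f ∧ ebIndex G f = k}

/-- The crown graph `K_n × K_2`: the direct product of the complete graph on `n` vertices
with `K_2`; `(u,a)` is adjacent to `(v,b)` iff `u ≠ v` and `a ≠ b`. -/
def crown (n : ℕ) : SimpleGraph (Fin n × Fin 2) :=
  tensorProd (⊤ : SimpleGraph (Fin n)) (⊤ : SimpleGraph (Fin 2))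

namespace CrownAux
open Finset

variable {n : ℕ}

lemma crown_adj {x y : Fin n × Fin 2} : (crown n).Adj x y ↔ x.1 ≠ y.1 ∧ x.2 ≠ y.2 :=
  Iff.rfl

lemma fin2_cases (a : Fin 2) : a = 0 ∨ a = 1 := by
  rcases a with ⟨v, hv⟩
  interval_cases v
  · exact Or.inl rfl
  · exact Or.inr rfl

lemma zmod2_cases (a : ZMod 2) : a = 0 ∨ a = 1 := by
  rcases a with ⟨v, hv⟩
  interval_cases v
  · exact Or.inl rfl
  · exact Or.inr rfl

def mkE (u v : Fin n) : Sym2 (Fin n × Fin 2) := s((u, (0 : Fin 2)), (v, (1 : Fin 2)))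

lemma mkE_mem {u v : Fin n} (h : u ≠ v) : mkE u v ∈ (crown n).edgeSet := by
  rw [mkE, SimpleGraph.mem_edgeSet]
  refine ⟨h, ?_⟩
  show (0 : Fin 2) ≠ 1
  decide

abbrev Pairs (n : ℕ) := {p : Fin n × Fin n // p.1 ≠ p.2}

def F (p : Pairs n) : (crown n).edgeSet := ⟨mkE p.1.1 p.1.2, mkE_mem p.2⟩

lemma F_bij : Function.Bijective (F (n := n)) := by
  constructor
  · rintro ⟨⟨a, b⟩, hab⟩ ⟨⟨c, d⟩, hcd⟩ h
    have h' : mkE a b = mkE c d := congrArg Subtype.val h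
    rw [mkE, mkE, Sym2.eq_iff] at h'
    rcases h' with ⟨h1, h2⟩ | ⟨h1, h2⟩
    · apply Subtype.ext
      simp only [Prod.mk.injEq] at h1 h2 ⊢
      exact ⟨h1.1, h2.1⟩
    · exfalso
      have := congrArg Prod.snd h1
      simp at this
  · rintro ⟨e, he⟩
    induction e with
    | _ a b =>
      rw [SimpleGraph.mem_edgeSet] at he
      obtain ⟨a1, a2⟩ := a
      obtain ⟨b1, b2⟩ := b
      obtain ⟨h1, h2⟩ := he
      simp only at h1 h2
      rcases fin2_cases a2 with ha | ha
      · have hb : b2 = 1 := by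
          rcases fin2_cases b2 with hb | hb
          · exact absurd (ha.trans hb.symm) h2
          · exact hb
        subst ha; subst hb
        exact ⟨⟨(a1, b1), h1⟩, rfl⟩
      · have hb : b2 = 0 := by
          rcases fin2_cases b2 with hb | hb
          · exact hb
          · exact absurd (ha.trans hb.symm) h2
        subst ha; subst hb
        refine ⟨⟨(b1, a1), fun hc => h1 hc.symm⟩, Subtype.ext ?_⟩
        show mkE b1 a1 = s((a1, 1), (b1, 0))
        rw [mkE, Sym2.eq_swap]

noncomputable def eqv (n : ℕ) : Pairs n ≃ (crown n).edgeSet := Equiv.ofBijective F F_bij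

lemma eqv_apply (p : Pairs n) : (eqv n p : Sym2 (Fin n × Fin 2)) = mkE p.1.1 p.1.2 := rfl

/-- the labeling matrix associated to an edge labeling -/
noncomputable def gOf (f : (crown n).edgeSet → ZMod 2) (u v : Fin n) : ZMod 2 :=
  if h : u = v then 0 else f (eqv n ⟨(u, v), h⟩)

lemma gOf_apply (f : (crown n).edgeSet → ZMod 2) (p : Pairs n) :
    gOf f p.1.1 p.1.2 = f (eqv n p) := by
  obtain ⟨⟨u, v⟩, huv⟩ := p
  simp only [gOf, dif_neg huv]

/-- row count -/
def Rc (g : Fin n → Fin n → ZMod 2) (i : ZMod 2) (w : Fin n) : ℕ :=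
  (univ.filter (fun v => v ≠ w ∧ g w v = i)).card

/-- column count -/
def Cc (g : Fin n → Fin n → ZMod 2) (i : ZMod 2) (w : Fin n) : ℕ :=
  (univ.filter (fun u => u ≠ w ∧ g u w = i)).card

lemma natCard_subtype {α : Type*} [Fintype α] (p : α → Prop) [DecidablePred p] :
    Nat.card {x // p x} = (univ.filter p).card := by
  rw [Nat.card_eq_fintype_card, Fintype.card_subtype]

/-- split a count over pairs into rows -/
lemma card_pairs_rows (P : Fin n → Fin n → Prop) [∀ u v, Decidable (P u v)] :
    Nat.card {p : Pairs n // P p.1.1 p.1.2} =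
      ∑ w : Fin n, (univ.filter (fun v => v ≠ w ∧ P w v)).card := by
  have e : {p : Pairs n // P p.1.1 p.1.2} ≃ (Σ w : Fin n, {v : Fin n // v ≠ w ∧ P w v}) :=
    { toFun := fun ⟨⟨⟨u, v⟩, huv⟩, hP⟩ => ⟨u, ⟨v, ⟨fun hc => huv hc.symm, hP⟩⟩⟩
      invFun := fun s => ⟨⟨(s.1, s.2.1), fun hc => s.2.2.1 hc.symm⟩, s.2.2.2⟩
      left_inv := fun p => rfl
      right_inv := fun s => rfl }
  rw [Nat.card_congr e, Nat.card_eq_fintype_card, Fintype.card_sigma]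
  congr 1
  ext w
  rw [Fintype.card_subtype]

/-- split a count over pairs into columns -/
lemma card_pairs_cols (P : Fin n → Fin n → Prop) [∀ u v, Decidable (P u v)] :
    Nat.card {p : Pairs n // P p.1.1 p.1.2} =
      ∑ w : Fin n, (univ.filter (fun u => u ≠ w ∧ P u w)).card := by
  have e : {p : Pairs n // P p.1.1 p.1.2} ≃ (Σ w : Fin n, {u : Fin n // u ≠ w ∧ P u w}) :=
    { toFun := fun p => ⟨p.1.1.2, ⟨p.1.1.1, ⟨p.1.2, p.2⟩⟩⟩
      invFun := fun s => ⟨⟨(s.2.1, s.1), s.2.2.1⟩, s.2.2.2⟩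
      left_inv := fun p => rfl
      right_inv := fun s => rfl }
  rw [Nat.card_congr e, Nat.card_eq_fintype_card, Fintype.card_sigma]
  congr 1
  ext w
  rw [Fintype.card_subtype]


lemma mem_mkE0 {w a b : Fin n} : ((w, (0 : Fin 2)) ∈ mkE a b) ↔ w = a := by
  rw [mkE, Sym2.mem_iff]
  constructor
  · rintro (h | h)
    · exact (Prod.ext_iff.mp h).1
    · exfalso
      have := (Prod.ext_iff.mp h).2
      simp at this
  · rintro rfl
    exact Or.inl rfl

lemma mem_mkE1 {w a b : Fin n} : ((w, (1 : Fin 2)) ∈ mkE a b) ↔ w = b := by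
  rw [mkE, Sym2.mem_iff]
  constructor
  · rintro (h | h)
    · exfalso
      have := (Prod.ext_iff.mp h).2
      simp at this
    · exact (Prod.ext_iff.mp h).1
  · rintro rfl
    exact Or.inr rfl

section Transfer
variable (f : (crown n).edgeSet → ZMod 2) (i : ZMod 2)

lemma edgeCount_eq_rows :
    edgeCount (crown n) f i = ∑ w : Fin n, Rc (gOf f) i w := by
  classical
  rw [edgeCount]
  have h1 : Nat.card {e : (crown n).edgeSet // f e = i}
      = Nat.card {p : Pairs n // gOf f p.1.1 p.1.2 = i} := by
    apply Nat.card_congr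
    refine Equiv.subtypeEquiv (eqv n).symm (fun e => ?_)
    rw [gOf_apply, Equiv.apply_symm_apply]
  rw [h1]
  exact card_pairs_rows (fun u v => gOf f u v = i)

lemma edgeCount_eq_cols :
    edgeCount (crown n) f i = ∑ w : Fin n, Cc (gOf f) i w := by
  classical
  rw [edgeCount]
  have h1 : Nat.card {e : (crown n).edgeSet // f e = i}
      = Nat.card {p : Pairs n // gOf f p.1.1 p.1.2 = i} := by
    apply Nat.card_congr
    refine Equiv.subtypeEquiv (eqv n).symm (fun e => ?_)
    rw [gOf_apply, Equiv.apply_symm_apply]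
  rw [h1]
  exact card_pairs_cols (fun u v => gOf f u v = i)

lemma labDeg_row (w : Fin n) : labDeg (crown n) f i (w, 0) = Rc (gOf f) i w := by
  classical
  rw [labDeg]
  have h1 : Nat.card {e : (crown n).edgeSet // f e = i ∧ (w, (0 : Fin 2)) ∈ (e : Sym2 (Fin n × Fin 2))}
      = Nat.card {p : Pairs n // gOf f p.1.1 p.1.2 = i ∧ p.1.1 = w} := by
    apply Nat.card_congr
    refine (Equiv.subtypeEquiv (eqv n) (fun p => ?_)).symm
    rw [gOf_apply]
    have hval : ((eqv n p : (crown n).edgeSet) : Sym2 (Fin n × Fin 2)) = mkE p.1.1 p.1.2 := rfl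
    rw [hval, mem_mkE0]
    constructor
    · rintro ⟨h1, h2⟩; exact ⟨h1, h2.symm⟩
    · rintro ⟨h1, h2⟩; exact ⟨h1, h2.symm⟩
  rw [h1, card_pairs_rows (fun u v => gOf f u v = i ∧ u = w)]
  rw [Finset.sum_eq_single w]
  · rw [Rc]
    apply congrArg
    apply filter_congr
    intro v _
    simp only [and_iff_left_iff_imp, and_congr_right_iff]
    tauto
  · intro w' _ hw'
    rw [Finset.card_eq_zero, Finset.filter_eq_empty_iff]
    rintro v _ ⟨_, _, rfl⟩
    exact hw' rfl
  · intro h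
    exact absurd (mem_univ w) h

lemma labDeg_col (w : Fin n) : labDeg (crown n) f i (w, 1) = Cc (gOf f) i w := by
  classical
  rw [labDeg]
  have h1 : Nat.card {e : (crown n).edgeSet // f e = i ∧ (w, (1 : Fin 2)) ∈ (e : Sym2 (Fin n × Fin 2))}
      = Nat.card {p : Pairs n // gOf f p.1.1 p.1.2 = i ∧ p.1.2 = w} := by
    apply Nat.card_congr
    refine (Equiv.subtypeEquiv (eqv n) (fun p => ?_)).symm
    rw [gOf_apply]
    have hval : ((eqv n p : (crown n).edgeSet) : Sym2 (Fin n × Fin 2)) = mkE p.1.1 p.1.2 := rfl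
    rw [hval, mem_mkE1]
    constructor
    · rintro ⟨h1, h2⟩; exact ⟨h1, h2.symm⟩
    · rintro ⟨h1, h2⟩; exact ⟨h1, h2.symm⟩
  rw [h1, card_pairs_cols (fun u v => gOf f u v = i ∧ v = w)]
  rw [Finset.sum_eq_single w]
  · rw [Cc]
    apply congrArg
    apply filter_congr
    intro v _
    simp only [and_iff_left_iff_imp, and_congr_right_iff]
    tauto
  · intro w' _ hw'
    rw [Finset.card_eq_zero, Finset.filter_eq_empty_iff]
    rintro v _ ⟨_, _, rfl⟩
    exact hw' rfl
  · intro h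
    exact absurd (mem_univ w) h

lemma vertexCount_eq :
    vertexCount (crown n) f i =
      (univ.filter (fun w => Rc (gOf f) (1 - i) w < Rc (gOf f) i w)).card
      + (univ.filter (fun w => Cc (gOf f) (1 - i) w < Cc (gOf f) i w)).card := by
  classical
  rw [vertexCount]
  have e : {x : Fin n × Fin 2 // labDeg (crown n) f (1 - i) x < labDeg (crown n) f i x}
      ≃ (Σ b : Fin 2, {w : Fin n // labDeg (crown n) f (1 - i) (w, b) < labDeg (crown n) f i (w, b)}) :=
    { toFun := fun ⟨⟨w, b⟩, h⟩ => ⟨b, ⟨w, h⟩⟩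
      invFun := fun s => ⟨(s.2.1, s.1), s.2.2⟩
      left_inv := fun ⟨⟨w, b⟩, h⟩ => rfl
      right_inv := fun ⟨b, w, h⟩ => rfl }
  rw [Nat.card_congr e, Nat.card_eq_fintype_card, Fintype.card_sigma, Fin.sum_univ_two]
  congr 1
  · rw [Fintype.card_subtype]
    apply congrArg
    apply filter_congr
    intro w _
    rw [labDeg_row, labDeg_row]
  · rw [Fintype.card_subtype]
    apply congrArg
    apply filter_congr
    intro w _
    rw [labDeg_col, labDeg_col]

end Transfer

lemma Rc_add (g : Fin n → Fin n → ZMod 2) (w : Fin n) :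
    Rc g 0 w + Rc g 1 w = n - 1 := by
  classical
  rw [Rc, Rc, ← card_union_of_disjoint, ← filter_or]
  · have h2 : univ.filter (fun v => (v ≠ w ∧ g w v = 0) ∨ (v ≠ w ∧ g w v = 1))
        = univ.filter (fun v => v ≠ w) := by
      apply filter_congr
      intro v _
      rcases zmod2_cases (g w v) with h | h <;> simp [h]
    rw [h2, filter_ne', card_erase_of_mem (mem_univ w), card_univ, Fintype.card_fin]
  · rw [Finset.disjoint_left]
    rintro v hv hv'
    simp only [mem_filter] at hv hv'
    have := hv.2.2.symm.trans hv'.2.2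
    simp at this

lemma Cc_add (g : Fin n → Fin n → ZMod 2) (w : Fin n) :
    Cc g 0 w + Cc g 1 w = n - 1 := by
  classical
  rw [Cc, Cc, ← card_union_of_disjoint, ← filter_or]
  · have h2 : univ.filter (fun u => (u ≠ w ∧ g u w = 0) ∨ (u ≠ w ∧ g u w = 1))
        = univ.filter (fun u => u ≠ w) := by
      apply filter_congr
      intro v _
      rcases zmod2_cases (g v w) with h | h <;> simp [h]
    rw [h2, filter_ne', card_erase_of_mem (mem_univ w), card_univ, Fintype.card_fin]
  · rw [Finset.disjoint_left]
    rintro v hv hv'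
    simp only [mem_filter] at hv hv'
    have := hv.2.2.symm.trans hv'.2.2
    simp at this


lemma zmod_one_sub_zero : (1 - 0 : ZMod 2) = 1 := by decide
lemma zmod_one_sub_one : (1 - 1 : ZMod 2) = 0 := by decide

lemma forward (hpos : 0 < n) (heven : Even n) (f : (crown n).edgeSet → ZMod 2)
    (hf : EdgeFriendly (crown n) f) :
    Even (ebIndex (crown n) f) ∧ ebIndex (crown n) f ≤ 2 * n - 4 := by
  classical
  obtain ⟨hsurj, habs⟩ := hf
  obtain ⟨h, hn⟩ := heven
  have hh : 0 < h := by omega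
  set g := gOf f with hg
  -- edge count facts
  have hsum : edgeCount (crown n) f 0 + edgeCount (crown n) f 1 = 2 * (h * (n - 1)) := by
    rw [edgeCount_eq_rows f 0, edgeCount_eq_rows f 1, ← Finset.sum_add_distrib]
    rw [Finset.sum_congr rfl (fun w _ => Rc_add g w)]
    rw [Finset.sum_const, card_univ, Fintype.card_fin, smul_eq_mul, hn]
    ring
  have habs' := abs_le.mp habs
  have he0 : edgeCount (crown n) f 0 = h * (n - 1) := by omega
  have he1 : edgeCount (crown n) f 1 = h * (n - 1) := by omega
  -- majority counts
  set A0 := (univ.filter (fun w => Rc g 1 w < Rc g 0 w)).card with hA0d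
  set A1 := (univ.filter (fun w => Rc g 0 w < Rc g 1 w)).card with hA1d
  set B0 := (univ.filter (fun w => Cc g 1 w < Cc g 0 w)).card with hB0d
  set B1 := (univ.filter (fun w => Cc g 0 w < Cc g 1 w)).card with hB1d
  have hv0 : vertexCount (crown n) f 0 = A0 + B0 := by
    rw [vertexCount_eq f 0, zmod_one_sub_zero]
  have hv1 : vertexCount (crown n) f 1 = A1 + B1 := by
    rw [vertexCount_eq f 1, zmod_one_sub_one]
  -- complementarity
  have hAn : A0 + A1 = n := by
    rw [hA0d, hA1d]
    have hcongr : (univ.filter (fun w => Rc g 0 w < Rc g 1 w)) =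
        (univ.filter (fun w => ¬ (Rc g 1 w < Rc g 0 w))) := by
      apply filter_congr
      intro w _
      have := Rc_add g w
      constructor
      · omega
      · intro hnot
        have hne : Rc g 0 w ≠ Rc g 1 w := by omega
        omega
    rw [hcongr, card_filter_add_card_filter_not, card_univ, Fintype.card_fin]
  have hBn : B0 + B1 = n := by
    rw [hB0d, hB1d]
    have hcongr : (univ.filter (fun w => Cc g 0 w < Cc g 1 w)) =
        (univ.filter (fun w => ¬ (Cc g 1 w < Cc g 0 w))) := by
      apply filter_congr
      intro w _
      have := Cc_add g w
      constructor
      · omega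
      · intro hnot
        have hne : Cc g 0 w ≠ Cc g 1 w := by omega
        omega
    rw [hcongr, card_filter_add_card_filter_not, card_univ, Fintype.card_fin]
  -- bounds
  have key : ∀ (i : ZMod 2) (D : ZMod 2 → Fin n → ℕ),
      (∀ w, D 0 w + D 1 w = n - 1) →
      (∑ w : Fin n, D i w) = h * (n - 1) →
      (univ.filter (fun w => D (1 - i) w < D i w)).card ≤ n - 1 := by
    intro i D hDadd hDsum
    set S := univ.filter (fun w => D (1 - i) w < D i w) with hS
    have hb : ∀ w ∈ S, h ≤ D i w := by
      intro w hw
      rw [hS, mem_filter] at hw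
      have h1 := hDadd w
      rcases zmod2_cases i with rfl | rfl
      · rw [zmod_one_sub_zero] at hw; omega
      · rw [zmod_one_sub_one] at hw; omega
    have h2 : S.card • h ≤ ∑ w ∈ S, D i w := Finset.card_nsmul_le_sum S (D i) h hb
    have h3 : ∑ w ∈ S, D i w ≤ ∑ w : Fin n, D i w :=
      Finset.sum_le_sum_of_subset (subset_univ S)
    rw [hDsum] at h3
    have h4 : S.card * h ≤ (n - 1) * h := by
      rw [smul_eq_mul] at h2
      calc S.card * h ≤ ∑ w ∈ S, D i w := h2
        _ ≤ (n - 1) * h := by rw [mul_comm]; exact h3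
    exact Nat.le_of_mul_le_mul_right h4 hh
  have hA0 : A0 ≤ n - 1 := by
    have := key 0 (fun i w => Rc g i w) (fun w => Rc_add g w)
      (by rw [← edgeCount_eq_rows f 0, he0])
    rw [zmod_one_sub_zero] at this
    exact this
  have hA1 : A1 ≤ n - 1 := by
    have := key 1 (fun i w => Rc g i w) (fun w => Rc_add g w)
      (by rw [← edgeCount_eq_rows f 1, he1])
    rw [zmod_one_sub_one] at this
    exact this
  have hB0 : B0 ≤ n - 1 := by
    have := key 0 (fun i w => Cc g i w) (fun w => Cc_add g w)
      (by rw [← edgeCount_eq_cols f 0, he0])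
    rw [zmod_one_sub_zero] at this
    exact this
  have hB1 : B1 ≤ n - 1 := by
    have := key 1 (fun i w => Cc g i w) (fun w => Cc_add g w)
      (by rw [← edgeCount_eq_cols f 1, he1])
    rw [zmod_one_sub_one] at this
    exact this
  -- conclude
  rw [ebIndex, hv0, hv1, Nat.even_iff]
  omega


/-- Gauss-type sum -/
lemma gauss' (a d e : ℕ) : 2 * (∑ w ∈ Ico a (a + d), (a + d + e - w)) = d * (d + 2 * e + 1) := by
  induction d generalizing e with
  | zero => simp
  | succ d ih =>
    rw [show a + (d + 1) = (a + d) + 1 by omega, Finset.sum_Ico_succ_top (Nat.le_add_right a d)]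
    have hb : ∀ w ∈ Ico a (a + d), a + d + 1 + e - w = a + d + (e + 1) - w := by
      intro w _; omega
    rw [Finset.sum_congr rfl hb, mul_add, ih (e + 1)]
    have h1 : 2 * (a + d + 1 + e - (a + d)) = 2 * (e + 1) := by omega
    rw [h1]; ring

lemma sum_Ico_sub (a b c : ℕ) (hab : a ≤ b) (hbc : b ≤ c) :
    2 * (∑ w ∈ Ico a b, (c - w)) = (b - a) * ((b - a) + 2 * (c - b) + 1) := by
  obtain ⟨d, rfl⟩ : ∃ d, b = a + d := ⟨b - a, by omega⟩
  obtain ⟨e, rfl⟩ : ∃ e, c = a + d + e := ⟨c - (a + d), by omega⟩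
  have e1 : a + d - a = d := by omega
  have e2 : a + d + e - (a + d) = e := by omega
  rw [e1, e2]
  exact gauss' a d e

lemma filter_fin_card (P : ℕ → Prop) [DecidablePred P] :
    (univ.filter (fun v : Fin n => P v.val)).card = ((range n).filter P).card := by
  apply Finset.card_bij (fun v _ => v.val)
  · intro v hv
    rw [mem_filter] at hv ⊢
    exact ⟨mem_range.mpr v.isLt, hv.2⟩
  · intro v₁ _ v₂ _ h
    exact Fin.val_injective h
  · intro b hb
    rw [mem_filter, mem_range] at hb
    exact ⟨⟨b, hb.1⟩, mem_filter.mpr ⟨mem_univ _, hb.2⟩, rfl⟩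

/-- The zero-set of the construction labeling, parameters `h = n/2`, `i = ⌈t/2⌉`, `j = ⌊t/2⌋`. -/
def Zp (h i j u v : ℕ) : Prop :=
  (u < v ∧ v - u < 2 * h - i)
  ∨ (h ≤ u ∧ u < h + i ∧ h - j ≤ v ∧ v < h ∧ i + v ≤ u)
  ∨ (j < i ∧ h ≤ u ∧ u < h + i ∧ v = 0)

instance (h i j u v : ℕ) : Decidable (Zp h i j u v) := by unfold Zp; infer_instance

def rowForm (h i w : ℕ) : ℕ :=
  if w < h then 2 * h - 1 - max i w
  else if w < h + i then h
  else 2 * h - 1 - w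

def colForm (h i j v : ℕ) : ℕ :=
  if v = 0 then (i - j) * i
  else if v < h - j then v
  else if v < h then h
  else min v (2 * h - 1 - i)

section Counts
variable {h i j : ℕ}

lemma row_count (hji : j ≤ i) (hij : i ≤ j + 1) (hih : i < h) (w : ℕ) (hw : w < 2 * h) :
    ((range (2 * h)).filter (fun v => v ≠ w ∧ Zp h i j w v)).card = rowForm h i w := by
  rcases lt_or_ge w h with hcase1 | hcase1
  · rcases lt_or_ge w i with hcase2 | hcase2
    · have hfe : (range (2 * h)).filter (fun v => v ≠ w ∧ Zp h i j w v)
          = Ico (w + 1) (w + (2 * h - i)) := by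
        ext v
        rw [mem_filter]
        simp only [mem_filter, mem_range, mem_Ico, Zp, and_true, true_and]
        omega
      rw [hfe, Nat.card_Ico, rowForm, if_pos hcase1]
      omega
    · have hfe : (range (2 * h)).filter (fun v => v ≠ w ∧ Zp h i j w v) = Ico (w + 1) (2 * h) := by
        ext v
        rw [mem_filter]
        simp only [mem_filter, mem_range, mem_Ico, Zp, and_true, true_and]
        omega
      rw [hfe, Nat.card_Ico, rowForm, if_pos hcase1]
      omega
  · rcases lt_or_ge w (h + i) with hcase2 | hcase2
    · rcases Nat.lt_or_ge j i with hji2 | hji2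
      · have hfe : (range (2 * h)).filter (fun v => v ≠ w ∧ Zp h i j w v)
            = insert 0 (Ico (h - j) (w + 1 - i) ∪ Ico (w + 1) (2 * h)) := by
          ext v
          rw [mem_filter]
          simp only [mem_filter, mem_range, mem_insert, mem_union, mem_Ico, Zp, and_true, true_and]
          omega
        rw [hfe, card_insert_of_notMem, card_union_of_disjoint]
        · rw [Nat.card_Ico, Nat.card_Ico, rowForm, if_neg (by omega), if_pos hcase2]
          omega
        · rw [Finset.disjoint_left]
          intro x hx hx'
          rw [mem_Ico] at hx hx'
          omega
        · rw [mem_union, mem_Ico, mem_Ico]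
          push_neg
          omega
      · have hfe : (range (2 * h)).filter (fun v => v ≠ w ∧ Zp h i j w v)
            = Ico (h - j) (w + 1 - i) ∪ Ico (w + 1) (2 * h) := by
          ext v
          rw [mem_filter]
          simp only [mem_filter, mem_range, mem_union, mem_Ico, Zp, and_true, true_and]
          omega
        rw [hfe, card_union_of_disjoint]
        · rw [Nat.card_Ico, Nat.card_Ico, rowForm, if_neg (by omega), if_pos hcase2]
          omega
        · rw [Finset.disjoint_left]
          intro x hx hx'
          rw [mem_Ico] at hx hx'
          omega
    · have hfe : (range (2 * h)).filter (fun v => v ≠ w ∧ Zp h i j w v)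
          = Ico (w + 1) (2 * h) := by
        ext v
        rw [mem_filter]
        simp only [mem_filter, mem_range, mem_Ico, Zp, and_true, true_and]
        omega
      rw [hfe, Nat.card_Ico, rowForm, if_neg (by omega), if_neg (by omega)]
      omega

lemma col_count (hji : j ≤ i) (hij : i ≤ j + 1) (hih : i < h) (v : ℕ) (hv : v < 2 * h) :
    ((range (2 * h)).filter (fun u => u ≠ v ∧ Zp h i j u v)).card = colForm h i j v := by
  rcases Nat.eq_zero_or_pos v with rfl | hvpos
  · rcases Nat.lt_or_ge j i with hji2 | hji2
    · have hfe : (range (2 * h)).filter (fun u => u ≠ 0 ∧ Zp h i j u 0)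
          = Ico h (h + i) := by
        ext u
        simp only [mem_filter, mem_range, mem_Ico, Zp, and_true, true_and]
        omega
      rw [hfe, Nat.card_Ico, colForm, if_pos rfl]
      have e1 : i - j = 1 := by omega
      rw [e1, one_mul]
      omega
    · have hfe : (range (2 * h)).filter (fun u => u ≠ 0 ∧ Zp h i j u 0) = ∅ := by
        ext u
        simp only [mem_filter, mem_range, Zp, and_true, true_and, Finset.notMem_empty, iff_false]
        omega
      rw [hfe, Finset.card_empty, colForm, if_pos rfl]
      have e1 : i - j = 0 := by omega
      rw [e1, zero_mul]
  · rcases lt_or_ge v (h - j) with hcase1 | hcase1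
    · have hfe : (range (2 * h)).filter (fun u => u ≠ v ∧ Zp h i j u v) = Ico 0 v := by
        ext u
        rw [mem_filter]
        simp only [mem_filter, mem_range, mem_Ico, Zp, and_true, true_and]
        omega
      rw [hfe, Nat.card_Ico, colForm, if_neg (by omega), if_pos hcase1]
      omega
    · rcases lt_or_ge v h with hcase2 | hcase2
      · have hfe : (range (2 * h)).filter (fun u => u ≠ v ∧ Zp h i j u v)
            = Ico 0 v ∪ Ico (i + v) (h + i) := by
          ext u
          rw [mem_filter]
          simp only [mem_filter, mem_range, mem_union, mem_Ico, Zp, and_true, true_and]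
          omega
        rw [hfe, card_union_of_disjoint]
        · rw [Nat.card_Ico, Nat.card_Ico, colForm, if_neg (by omega), if_neg (by omega),
            if_pos hcase2]
          omega
        · rw [Finset.disjoint_left]
          intro x hx hx'
          rw [mem_Ico] at hx hx'
          omega
      · have hfe : (range (2 * h)).filter (fun u => u ≠ v ∧ Zp h i j u v)
            = Ico (v + i + 1 - 2 * h) v := by
          ext u
          rw [mem_filter]
          simp only [mem_filter, mem_range, mem_Ico, Zp, and_true, true_and]
          omega
        rw [hfe, Nat.card_Ico, colForm, if_neg (by omega), if_neg (by omega), if_neg (by omega)]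
        omega

end Counts

lemma row_sum {h i j : ℕ} (hji : j ≤ i) (hij : i ≤ j + 1) (hih : i < h) :
    ∑ w ∈ range (2 * h), rowForm h i w = h * (2 * h - 1) := by
  have esplit : ∑ w ∈ range (2 * h), rowForm h i w
      = (∑ w ∈ Ico 0 i, rowForm h i w) + (∑ w ∈ Ico i h, rowForm h i w)
        + (∑ w ∈ Ico h (h + i), rowForm h i w) + (∑ w ∈ Ico (h + i) (2 * h), rowForm h i w) := by
    rw [range_eq_Ico,
      ← Finset.sum_Ico_consecutive _ (Nat.zero_le i) (by omega : i ≤ 2 * h),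
      ← Finset.sum_Ico_consecutive _ (by omega : i ≤ h) (by omega : h ≤ 2 * h),
      ← Finset.sum_Ico_consecutive _ (by omega : h ≤ h + i) (by omega : h + i ≤ 2 * h)]
    ring
  have e1 : ∑ w ∈ Ico 0 i, rowForm h i w = i * (2 * h - 1 - i) := by
    rw [Finset.sum_congr rfl (fun w hw => ?_), Finset.sum_const, Nat.card_Ico, Nat.sub_zero,
      smul_eq_mul]
    rw [mem_Ico] at hw
    rw [rowForm, if_pos (by omega), Nat.max_eq_left (by omega)]
  have e2 : 2 * ∑ w ∈ Ico i h, rowForm h i w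
      = (h - i) * ((h - i) + 2 * (2 * h - 1 - h) + 1) := by
    rw [Finset.sum_congr rfl (fun w hw => ?_)]
    · exact sum_Ico_sub i h (2 * h - 1) (by omega) (by omega)
    · rw [mem_Ico] at hw
      rw [rowForm, if_pos (by omega), Nat.max_eq_right (by omega)]
  have e3 : ∑ w ∈ Ico h (h + i), rowForm h i w = i * h := by
    rw [Finset.sum_congr rfl (fun w hw => ?_), Finset.sum_const, Nat.card_Ico,
      Nat.add_sub_cancel_left, smul_eq_mul]
    rw [mem_Ico] at hw
    rw [rowForm, if_neg (by omega), if_pos (by omega)]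
  have e4 : 2 * ∑ w ∈ Ico (h + i) (2 * h), rowForm h i w
      = (2 * h - 1 - (h + i)) * ((2 * h - 1 - (h + i)) + 2 * 0 + 1) := by
    rw [show 2 * h = (2 * h - 1) + 1 by omega,
      Finset.sum_Ico_succ_top (by omega : h + i ≤ 2 * h - 1)]
    have hlast : rowForm h i (2 * h - 1) = 0 := by
      rw [rowForm, if_neg (by omega), if_neg (by omega)]
      omega
    rw [hlast, add_zero, Finset.sum_congr rfl (fun w hw => ?_)]
    · have := sum_Ico_sub (h + i) (2 * h - 1) (2 * h - 1) (by omega) (le_refl _)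
      rw [this]
      congr 1
      omega
    · rw [mem_Ico] at hw
      rw [rowForm, if_neg (by omega), if_neg (by omega)]
  -- combine
  have hdbl : 2 * (∑ w ∈ range (2 * h), rowForm h i w) = 2 * (h * (2 * h - 1)) := by
    rw [esplit]
    have hA : (2 * h - 1 - i) = 2 * h - 1 - i := rfl
    zify [show i ≤ 2 * h - 1 by omega, show i ≤ h by omega, show h ≤ 2 * h - 1 by omega,
      show h + i ≤ 2 * h - 1 by omega, show 1 ≤ 2 * h by omega] at e1 e2 e3 e4 ⊢
    linear_combination 2 * e1 + e2 + 2 * e3 + e4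
  omega

lemma maj_rows {h i j : ℕ} (hji : j ≤ i) (hij : i ≤ j + 1) (hih : i < h) :
    ((range (2 * h)).filter (fun w => 2 * h ≤ 2 * rowForm h i w)).card = h + i := by
  have hfe : (range (2 * h)).filter (fun w => 2 * h ≤ 2 * rowForm h i w) = Ico 0 (h + i) := by
    ext w
    rw [mem_filter]
    simp only [mem_filter, mem_range, mem_Ico, rowForm]
    split_ifs <;> omega
  rw [hfe, Nat.card_Ico, Nat.sub_zero]

lemma maj_cols {h i j : ℕ} (hji : j ≤ i) (hij : i ≤ j + 1) (hih : i < h) :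
    ((range (2 * h)).filter (fun v => 2 * h ≤ 2 * colForm h i j v)).card = h + j := by
  have hfe : (range (2 * h)).filter (fun v => 2 * h ≤ 2 * colForm h i j v)
      = Ico (h - j) (2 * h) := by
    ext v
    rcases (by omega : i = j ∨ i = j + 1) with rfl | rfl
    · simp only [mem_filter, mem_range, mem_Ico, colForm, Nat.sub_self, zero_mul]
      split_ifs <;> omega
    · simp only [mem_filter, mem_range, mem_Ico, colForm,
        show j + 1 - j = 1 from by omega, one_mul]
      split_ifs <;> omega
  rw [hfe, Nat.card_Ico]
  omega

lemma vertexCount_add (hpos : 0 < n) (heven : Even n) (f : (crown n).edgeSet → ZMod 2) :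
    vertexCount (crown n) f 0 + vertexCount (crown n) f 1 = 2 * n := by
  classical
  obtain ⟨h, hn⟩ := heven
  have hg : True := trivial
  rw [vertexCount_eq f 0, zmod_one_sub_zero, vertexCount_eq f 1, zmod_one_sub_one]
  set g := gOf f with hgdef
  have hAn : (univ.filter (fun w => Rc g 1 w < Rc g 0 w)).card
      + (univ.filter (fun w => Rc g 0 w < Rc g 1 w)).card = n := by
    have hcongr : (univ.filter (fun w => Rc g 0 w < Rc g 1 w)) =
        (univ.filter (fun w => ¬ (Rc g 1 w < Rc g 0 w))) := by
      apply filter_congr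
      intro w _
      have := Rc_add g w
      constructor
      · omega
      · intro hnot
        have hne : Rc g 0 w ≠ Rc g 1 w := by omega
        omega
    rw [hcongr, card_filter_add_card_filter_not, card_univ, Fintype.card_fin]
  have hBn : (univ.filter (fun w => Cc g 1 w < Cc g 0 w)).card
      + (univ.filter (fun w => Cc g 0 w < Cc g 1 w)).card = n := by
    have hcongr : (univ.filter (fun w => Cc g 0 w < Cc g 1 w)) =
        (univ.filter (fun w => ¬ (Cc g 1 w < Cc g 0 w))) := by
      apply filter_congr
      intro w _
      have := Cc_add g w
      constructor
      · omega
      · intro hnot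
        have hne : Cc g 0 w ≠ Cc g 1 w := by omega
        omega
    rw [hcongr, card_filter_add_card_filter_not, card_univ, Fintype.card_fin]
  omega


lemma backward (hpos : 0 < n) (heven : Even n) (t : ℕ) (ht : t + 2 ≤ n) :
    ∃ f : (crown n).edgeSet → ZMod 2, EdgeFriendly (crown n) f ∧ ebIndex (crown n) f = 2 * t := by
  classical
  obtain ⟨h, hn⟩ := heven
  have hn2 : n = 2 * h := by omega
  subst hn2
  have hh : 0 < h := by omega
  set i := (t + 1) / 2 with hidef
  set j := t / 2 with hjdef
  have hji : j ≤ i := by omega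
  have hij : i ≤ j + 1 := by omega
  have hijt : i + j = t := by omega
  have hih : i < h := by omega
  set gZ : Fin (2 * h) → Fin (2 * h) → ZMod 2 :=
    fun u v => if Zp h i j u.val v.val then 0 else 1 with hgZdef
  set f : (crown (2 * h)).edgeSet → ZMod 2 :=
    fun e => gZ (((eqv (2 * h)).symm e).1.1) (((eqv (2 * h)).symm e).1.2) with hfdef
  have hfeqv : ∀ p : Pairs (2 * h), f (eqv (2 * h) p) = gZ p.1.1 p.1.2 := by
    intro p
    rw [hfdef]
    simp only [Equiv.symm_apply_apply]
  have hgof : ∀ u v : Fin (2 * h), u ≠ v → gOf f u v = gZ u v := by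
    intro u v huv
    rw [gOf, dif_neg huv]
    exact hfeqv ⟨(u, v), huv⟩
  have hgZ0 : ∀ u v : Fin (2 * h), (gZ u v = 0 ↔ Zp h i j u.val v.val) := by
    intro u v
    rw [hgZdef]
    show (if Zp h i j u.val v.val then (0 : ZMod 2) else 1) = 0 ↔ Zp h i j u.val v.val
    split_ifs with hz
    · simp [hz]
    · simp only [iff_false_intro hz, iff_false]
      decide
  -- row and column counts
  have hRc : ∀ w : Fin (2 * h), Rc (gOf f) 0 w = rowForm h i w.val := by
    intro w
    rw [Rc]
    have hcongr : (univ.filter (fun v => v ≠ w ∧ gOf f w v = 0))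
        = univ.filter (fun v : Fin (2 * h) => v.val ≠ w.val ∧ Zp h i j w.val v.val) := by
      apply filter_congr
      intro v _
      constructor
      · rintro ⟨h1, h2⟩
        refine ⟨fun hc => h1 (Fin.ext hc), ?_⟩
        rw [hgof w v (fun hc => h1 hc.symm), hgZ0] at h2
        exact h2
      · rintro ⟨h1, h2⟩
        have hvw : v ≠ w := fun hc => h1 (by rw [hc])
        refine ⟨hvw, ?_⟩
        rw [hgof w v (fun hc => hvw hc.symm), hgZ0]
        exact h2
    rw [hcongr, filter_fin_card (fun x => x ≠ w.val ∧ Zp h i j w.val x)]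
    exact row_count hji hij hih w.val w.isLt
  have hCc : ∀ w : Fin (2 * h), Cc (gOf f) 0 w = colForm h i j w.val := by
    intro w
    rw [Cc]
    have hcongr : (univ.filter (fun u => u ≠ w ∧ gOf f u w = 0))
        = univ.filter (fun u : Fin (2 * h) => u.val ≠ w.val ∧ Zp h i j u.val w.val) := by
      apply filter_congr
      intro v _
      constructor
      · rintro ⟨h1, h2⟩
        refine ⟨fun hc => h1 (Fin.ext hc), ?_⟩
        rw [hgof v w h1, hgZ0] at h2
        exact h2
      · rintro ⟨h1, h2⟩
        have hvw : v ≠ w := fun hc => h1 (by rw [hc])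
        refine ⟨hvw, ?_⟩
        rw [hgof v w hvw, hgZ0]
        exact h2
    rw [hcongr, filter_fin_card (fun x => x ≠ w.val ∧ Zp h i j x w.val)]
    exact col_count hji hij hih w.val w.isLt
  -- edge counts
  have he0 : edgeCount (crown (2 * h)) f 0 = h * (2 * h - 1) := by
    rw [edgeCount_eq_rows f 0, Finset.sum_congr rfl (fun w _ => hRc w),
      Fin.sum_univ_eq_sum_range (fun k => rowForm h i k) (2 * h)]
    exact row_sum hji hij hih
  have hsum : edgeCount (crown (2 * h)) f 0 + edgeCount (crown (2 * h)) f 1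
      = 2 * h * (2 * h - 1) := by
    rw [edgeCount_eq_rows f 0, edgeCount_eq_rows f 1, ← Finset.sum_add_distrib,
      Finset.sum_congr rfl (fun w _ => Rc_add (gOf f) w), Finset.sum_const, card_univ,
      Fintype.card_fin, smul_eq_mul]
  have he1 : edgeCount (crown (2 * h)) f 1 = h * (2 * h - 1) := by
    have hexp : 2 * h * (2 * h - 1) = h * (2 * h - 1) + h * (2 * h - 1) := by ring
    omega
  -- vertex counts
  have hv0 : vertexCount (crown (2 * h)) f 0 = 2 * h + t := by
    rw [vertexCount_eq f 0, zmod_one_sub_zero]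
    have hA : (univ.filter (fun w => Rc (gOf f) 1 w < Rc (gOf f) 0 w)).card = h + i := by
      have hcongr : (univ.filter (fun w => Rc (gOf f) 1 w < Rc (gOf f) 0 w))
          = univ.filter (fun w : Fin (2 * h) => 2 * h ≤ 2 * rowForm h i w.val) := by
        apply filter_congr
        intro w _
        have h1 := Rc_add (gOf f) w
        have h2 := hRc w
        constructor <;> (intro; omega)
      rw [hcongr, filter_fin_card (fun x => 2 * h ≤ 2 * rowForm h i x), maj_rows hji hij hih]
    have hB : (univ.filter (fun w => Cc (gOf f) 1 w < Cc (gOf f) 0 w)).card = h + j := by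
      have hcongr : (univ.filter (fun w => Cc (gOf f) 1 w < Cc (gOf f) 0 w))
          = univ.filter (fun w : Fin (2 * h) => 2 * h ≤ 2 * colForm h i j w.val) := by
        apply filter_congr
        intro w _
        have h1 := Cc_add (gOf f) w
        have h2 := hCc w
        constructor <;> (intro; omega)
      rw [hcongr, filter_fin_card (fun x => 2 * h ≤ 2 * colForm h i j x), maj_cols hji hij hih]
    rw [hA, hB]
    omega
  have hv01 := vertexCount_add hpos ⟨h, two_mul h⟩ f
  have hv1 : vertexCount (crown (2 * h)) f 1 = 2 * h - t := by omega
  refine ⟨f, ⟨⟨?_, ?_⟩, ?_⟩⟩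
  · -- surjective
    intro b
    rcases zmod2_cases b with rfl | rfl
    · refine ⟨eqv (2 * h) ⟨(⟨0, by omega⟩, ⟨1, by omega⟩), ?_⟩, ?_⟩
      · simp only [ne_eq, Fin.mk.injEq]
        omega
      · rw [hfeqv]
        refine (hgZ0 _ _).mpr ?_
        show Zp h i j 0 1
        unfold Zp
        omega
    · refine ⟨eqv (2 * h) ⟨(⟨2 * h - 1, by omega⟩, ⟨0, by omega⟩), ?_⟩, ?_⟩
      · simp only [ne_eq, Fin.mk.injEq]
        omega
      · rw [hfeqv, hgZdef]
        show (if Zp h i j (2 * h - 1) 0 then (0 : ZMod 2) else 1) = 1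
        rw [if_neg]
        unfold Zp
        omega
  · -- balance
    rw [he0, he1, sub_self, abs_zero]
    exact zero_le_one
  · -- index
    rw [ebIndex, hv0, hv1]
    omega

end CrownAux

theorem EBI_crown_even (n : ℕ) (hpos : 0 < n) (heven : Even n) :
    EBI (crown n) = {k : ℕ | Even k ∧ k ≤ 2 * n - 4} := by
  ext k
  simp only [EBI, Set.mem_setOf_eq]
  constructor
  · rintro ⟨f, hf, rfl⟩
    exact CrownAux.forward hpos heven f hf
  · rintro ⟨hk1, hk2⟩
    obtain ⟨t, rfl⟩ := hk1
    have hn2 : 2 ≤ n := by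
      rcases heven with ⟨m, hm⟩
      omega
    obtain ⟨f, hf, he⟩ := CrownAux.backward hpos heven t (by omega)
    exact ⟨f, hf, by omega⟩
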